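/- arXiv:2402.13384 — 3 statements merged into one kernel-verified Lean document; each statement's English description precedes it below -/
import Mathlib

section
/- For all real numbers μ and τ, the integral over the real line of Φ(τx + μ) against the standard normal density equals Φ(μ/√(1+τ²)); that is, ∫_ℝ Φ(τx + μ) φ(x) dx = Φ(μ/√(1+τ²)). -/
open MeasureTheory Real Filter
open scoped ENNReal

/-- The standard normal density `φ(x) = (2π)^{-1/2} exp(-x²/2)`. -/
noncomputable def stdNormalPDF (x : ℝ) : ℝ :=
  (Real.sqrt (2 * Real.pi))⁻¹ * Real.exp (-x ^ 2 / 2)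

/-- The standard normal CDF `Φ(x) = ∫_{-∞}^x φ(t) dt`. -/
noncomputable def stdNormalCDF (x : ℝ) : ℝ :=
  ∫ t in Set.Iio x, stdNormalPDF t

lemma stdNormalPDF_nonneg (x : ℝ) : 0 ≤ stdNormalPDF x := by
  unfold stdNormalPDF; positivity

lemma continuous_stdNormalPDF : Continuous stdNormalPDF := by
  unfold stdNormalPDF; fun_prop

lemma stdNormalPDF_le (x : ℝ) : stdNormalPDF x ≤ (Real.sqrt (2 * Real.pi))⁻¹ := by
  unfold stdNormalPDF
  have h1 : Real.exp (-x ^ 2 / 2) ≤ 1 :=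
    Real.exp_le_one_iff.mpr (by nlinarith [sq_nonneg x])
  calc (Real.sqrt (2 * Real.pi))⁻¹ * Real.exp (-x ^ 2 / 2)
      ≤ (Real.sqrt (2 * Real.pi))⁻¹ * 1 :=
        mul_le_mul_of_nonneg_left h1 (by positivity)
    _ = (Real.sqrt (2 * Real.pi))⁻¹ := mul_one _

lemma integrable_stdNormalPDF : Integrable stdNormalPDF := by
  have : stdNormalPDF = fun x => (Real.sqrt (2 * Real.pi))⁻¹ * Real.exp (-(1/2 : ℝ) * x ^ 2) := by
    funext x; unfold stdNormalPDF; ring_nf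
  rw [this]
  exact (integrable_exp_neg_mul_sq (by norm_num : (0:ℝ) < 1/2)).const_mul _

lemma stdNormalCDF_nonneg (x : ℝ) : 0 ≤ stdNormalCDF x :=
  setIntegral_nonneg measurableSet_Iio fun t _ => stdNormalPDF_nonneg t

lemma monotone_stdNormalCDF : Monotone stdNormalCDF := fun _ _ hxy =>
  setIntegral_mono_set integrable_stdNormalPDF.integrableOn
    (Eventually.of_forall fun t => stdNormalPDF_nonneg t)
    (HasSubset.Subset.eventuallyLE (Set.Iio_subset_Iio hxy))

lemma measurable_stdNormalCDF : Measurable stdNormalCDF :=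
  monotone_stdNormalCDF.measurable

lemma key_gaussian_integral (τ u : ℝ) :
    ∫ x : ℝ, stdNormalPDF (u + τ * x) * stdNormalPDF x
      = (Real.sqrt (1 + τ ^ 2))⁻¹ * stdNormalPDF (u / Real.sqrt (1 + τ ^ 2)) := by
  set a : ℝ := 1 + τ ^ 2 with ha_def
  have ha : 0 < a := by positivity
  have h2π : 0 < 2 * π := by positivity
  have hs : (0:ℝ) < Real.sqrt (2 * π) := Real.sqrt_pos.mpr h2π
  have hsa : (0:ℝ) < Real.sqrt a := Real.sqrt_pos.mpr ha
  have h1 : ∀ x : ℝ, stdNormalPDF (u + τ * x) * stdNormalPDF x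
      = ((Real.sqrt (2 * π))⁻¹ * (Real.sqrt (2 * π))⁻¹ * Real.exp (-u ^ 2 / (2 * a)))
        * Real.exp (-(a / 2) * (x + τ * u / a) ^ 2) := by
    intro x
    unfold stdNormalPDF
    rw [mul_mul_mul_comm, ← Real.exp_add,
      mul_assoc ((Real.sqrt (2 * π))⁻¹ * (Real.sqrt (2 * π))⁻¹), ← Real.exp_add]
    congr 2
    field_simp
    ring
  rw [integral_congr_ae (Eventually.of_forall h1), integral_const_mul,
    integral_add_right_eq_self (fun x => Real.exp (-(a / 2) * x ^ 2)) (τ * u / a),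
    integral_gaussian]
  have hexp : (u / Real.sqrt a) ^ 2 / 2 = u ^ 2 / (2 * a) := by
    rw [div_pow, Real.sq_sqrt ha.le, div_div, mul_comm a 2]
  unfold stdNormalPDF
  rw [neg_div, ← hexp]
  have hsqrt : Real.sqrt (π / (a / 2)) = Real.sqrt (2 * π) / Real.sqrt a := by
    rw [show π / (a / 2) = 2 * π / a by field_simp, Real.sqrt_div h2π.le]
  rw [hsqrt]
  field_simp

lemma integral_comp_mul_left_Iio' (g : ℝ → ℝ) (a : ℝ) {b : ℝ} (hb : 0 < b) :
    (∫ x in Set.Iio a, g (b * x)) = b⁻¹ • ∫ x in Set.Iio (b * a), g x := by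
  have h : ∀ c : ℝ, MeasurableSet (Set.Iio c) := fun c => measurableSet_Iio
  rw [← integral_indicator (h a), ← integral_indicator (h (b * a)),
    ← abs_of_pos (inv_pos.mpr hb), ← Measure.integral_comp_mul_left]
  congr
  ext1 x
  rw [← Set.indicator_comp_right, (Set.preimage_const_mul_Iio₀ (b * a) hb : HMul.hMul b ⁻¹' Set.Iio (b * a) = _),
    mul_div_cancel_left₀ _ hb.ne']
  rfl

/-- For all real `μ` and `τ`, `∫_ℝ Φ(τx + μ) φ(x) dx = Φ(μ/√(1+τ²))`. -/
theorem integral_stdNormalCDF_mul_stdNormalPDF (μ τ : ℝ) :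
    ∫ x : ℝ, stdNormalCDF (τ * x + μ) * stdNormalPDF x
      = stdNormalCDF (μ / Real.sqrt (1 + τ ^ 2)) := by
  have hσ : (0:ℝ) < Real.sqrt (1 + τ ^ 2) := Real.sqrt_pos.mpr (by positivity)
  set σ : ℝ := Real.sqrt (1 + τ ^ 2) with hσdef
  set P : ℝ → ℝ≥0∞ := fun t => ENNReal.ofReal (stdNormalPDF t) with hP
  have hPmeas : Measurable P :=
    ENNReal.measurable_ofReal.comp continuous_stdNormalPDF.measurable
  have hmeas : Measurable fun x => stdNormalCDF (τ * x + μ) * stdNormalPDF x :=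
    (measurable_stdNormalCDF.comp (by fun_prop)).mul continuous_stdNormalPDF.measurable
  have hnn : ∀ x, 0 ≤ stdNormalCDF (τ * x + μ) * stdNormalPDF x := fun x =>
    mul_nonneg (stdNormalCDF_nonneg _) (stdNormalPDF_nonneg _)
  rw [integral_eq_lintegral_of_nonneg_ae (Eventually.of_forall hnn)
    hmeas.aestronglyMeasurable]
  -- Step: ofReal of CDF as a lintegral, translated
  have hcdf : ∀ x : ℝ, ENNReal.ofReal (stdNormalCDF (τ * x + μ))
      = ∫⁻ u in Set.Iio μ, P (u + τ * x) := by
    intro x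
    have h1 : ENNReal.ofReal (stdNormalCDF (τ * x + μ))
        = ∫⁻ t in Set.Iio (τ * x + μ), P t :=
      ofReal_integral_eq_lintegral_ofReal integrable_stdNormalPDF.integrableOn
        (Eventually.of_forall fun t => stdNormalPDF_nonneg t)
    have h2 : (∫⁻ u in Set.Iio μ, P (u + τ * x))
        = ∫⁻ t in (fun u : ℝ => u + τ * x) '' Set.Iio μ, P t :=
      (measurePreserving_add_right volume (τ * x)).setLIntegral_comp_emb
        (measurableEmbedding_addRight (τ * x)) P (Set.Iio μ)
    rw [h1, h2, Set.image_add_const_Iio, add_comm μ (τ * x)]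
  have hinner : ∀ u : ℝ, (∫⁻ x, P (u + τ * x) * P x)
      = ENNReal.ofReal (σ⁻¹ * stdNormalPDF (u / σ)) := by
    intro u
    have hint : Integrable fun x => stdNormalPDF (u + τ * x) * stdNormalPDF x := by
      refine Integrable.mono (integrable_stdNormalPDF.const_mul (Real.sqrt (2 * π))⁻¹)
        ((continuous_stdNormalPDF.comp (by fun_prop)).mul
          continuous_stdNormalPDF).aestronglyMeasurable
        (Eventually.of_forall fun x => ?_)
      rw [Real.norm_eq_abs, Real.norm_eq_abs,
        abs_of_nonneg (mul_nonneg (stdNormalPDF_nonneg _) (stdNormalPDF_nonneg _)),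
        abs_of_nonneg (mul_nonneg (by positivity) (stdNormalPDF_nonneg _))]
      exact mul_le_mul_of_nonneg_right (stdNormalPDF_le _) (stdNormalPDF_nonneg _)
    calc (∫⁻ x, P (u + τ * x) * P x)
        = ∫⁻ x, ENNReal.ofReal (stdNormalPDF (u + τ * x) * stdNormalPDF x) :=
          lintegral_congr fun x => (ENNReal.ofReal_mul (stdNormalPDF_nonneg _)).symm
      _ = ENNReal.ofReal (∫ x, stdNormalPDF (u + τ * x) * stdNormalPDF x) :=
          (ofReal_integral_eq_lintegral_ofReal hint
            (Eventually.of_forall fun x =>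
              mul_nonneg (stdNormalPDF_nonneg _) (stdNormalPDF_nonneg _))).symm
      _ = ENNReal.ofReal (σ⁻¹ * stdNormalPDF (u / σ)) := by
          rw [key_gaussian_integral τ u]
  have hswap : AEMeasurable (Function.uncurry fun x u => P (u + τ * x) * P x)
      (volume.prod (volume.restrict (Set.Iio μ))) := by
    apply Measurable.aemeasurable
    exact ((hPmeas.comp (measurable_snd.add (measurable_fst.const_mul τ))).mul
      (hPmeas.comp measurable_fst))
  have hint7 : IntegrableOn (fun u => σ⁻¹ * stdNormalPDF (u / σ)) (Set.Iio μ) :=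
    ((integrable_stdNormalPDF.comp_div hσ.ne').const_mul _).integrableOn
  have step8 : (∫ u in Set.Iio μ, σ⁻¹ * stdNormalPDF (u / σ)) = stdNormalCDF (μ / σ) := by
    rw [integral_const_mul]
    simp_rw [div_eq_inv_mul]
    rw [integral_comp_mul_left_Iio' stdNormalPDF μ (inv_pos.mpr hσ), inv_inv,
      smul_eq_mul, inv_mul_cancel_left₀ hσ.ne', inv_mul_eq_div]
    rfl
  have main : (∫⁻ x, ENNReal.ofReal (stdNormalCDF (τ * x + μ) * stdNormalPDF x))
      = ENNReal.ofReal (stdNormalCDF (μ / σ)) := by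
    calc (∫⁻ x, ENNReal.ofReal (stdNormalCDF (τ * x + μ) * stdNormalPDF x))
        = ∫⁻ x, (∫⁻ u in Set.Iio μ, P (u + τ * x)) * P x := by
          refine lintegral_congr fun x => ?_
          rw [ENNReal.ofReal_mul (stdNormalCDF_nonneg _), hcdf x]
      _ = ∫⁻ x, ∫⁻ u in Set.Iio μ, P (u + τ * x) * P x := by
          exact lintegral_congr fun x =>
            (lintegral_mul_const (P x) (hPmeas.comp (measurable_add_const (τ * x)))).symm
      _ = ∫⁻ u in Set.Iio μ, ∫⁻ x, P (u + τ * x) * P x :=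
          lintegral_lintegral_swap hswap
      _ = ∫⁻ u in Set.Iio μ, ENNReal.ofReal (σ⁻¹ * stdNormalPDF (u / σ)) :=
          lintegral_congr fun u => hinner u
      _ = ENNReal.ofReal (∫ u in Set.Iio μ, σ⁻¹ * stdNormalPDF (u / σ)) :=
          (ofReal_integral_eq_lintegral_ofReal hint7
            (Eventually.of_forall fun u => mul_nonneg (by positivity)
              (stdNormalPDF_nonneg _))).symm
      _ = ENNReal.ofReal (stdNormalCDF (μ / σ)) := by rw [step8]
  rw [main, ENNReal.toReal_ofReal (stdNormalCDF_nonneg _)]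
end

section
/- (Proposition 4) Fix ε ∈ (0,1) and let ε* ∈ ℝ be the unique real with Φ(ε*) = ε. Then the expected number of common features in the MVP-IBP model, E(c^{(ε)}) = p · (1 − Φ((ε* − μ_p)/τ_p)), satisfies lim_{p→∞} p · (1 − Φ((ε* − μ_p)/τ_p)) = α · exp(−ε* − 1/2). -/
open MeasureTheory Real Filter

/-- `τ_p = √(2 log p)`. -/
noncomputable def tauP (p : ℕ) : ℝ := Real.sqrt (2 * Real.log p)

/-- The density of `N(μ_p, τ_p²)` at `x`, namely `τ_p⁻¹ φ((x - μ_p)/τ_p)`. -/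
noncomputable def mvpDens (μ : ℕ → ℝ) (p : ℕ) (x : ℝ) : ℝ :=
  (tauP p)⁻¹ * stdNormalPDF ((x - μ p) / tauP p)

open Set

namespace MvpAux

lemma sqrt2pi_pos : 0 < Real.sqrt (2 * Real.pi) :=
  Real.sqrt_pos.2 (by positivity)

lemma pdf_pos (x : ℝ) : 0 < stdNormalPDF x := by
  unfold stdNormalPDF
  positivity

lemma pdf_eq (x : ℝ) : stdNormalPDF x =
    (Real.sqrt (2 * Real.pi))⁻¹ * Real.exp (-(1/2) * x ^ 2) := by
  unfold stdNormalPDF; ring_nf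

lemma continuous_pdf : Continuous stdNormalPDF := by
  unfold stdNormalPDF
  continuity

lemma integrable_pdf : Integrable stdNormalPDF := by
  have h := (integrable_exp_neg_mul_sq (by norm_num : (0:ℝ) < 1/2)).const_mul
    (Real.sqrt (2 * Real.pi))⁻¹
  refine h.congr ?_
  filter_upwards with x
  rw [pdf_eq]

lemma integral_pdf : ∫ x, stdNormalPDF x = 1 := by
  have h : ∫ x : ℝ, stdNormalPDF x
      = (Real.sqrt (2 * Real.pi))⁻¹ * ∫ x : ℝ, Real.exp (-(1/2) * x ^ 2) := by
    rw [← integral_const_mul]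
    congr 1; ext x; rw [pdf_eq]
  rw [h, integral_gaussian]
  rw [show Real.pi / (1/2) = 2 * Real.pi by ring]
  exact inv_mul_cancel₀ sqrt2pi_pos.ne'

lemma one_sub_cdf (y : ℝ) : 1 - stdNormalCDF y = ∫ x in Set.Ioi y, stdNormalPDF x := by
  have := integral_add_compl (measurableSet_Iio (a := y)) integrable_pdf (μ := volume)
  rw [compl_Iio, integral_pdf] at this
  rw [← integral_Ici_eq_integral_Ioi]
  unfold stdNormalCDF
  linarith

lemma pdf_neg (x : ℝ) : stdNormalPDF (-x) = stdNormalPDF x := by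
  unfold stdNormalPDF; rw [neg_pow]; ring_nf

lemma cdf_neg (x : ℝ) : stdNormalCDF (-x) = ∫ t in Set.Ioi x, stdNormalPDF t := by
  unfold stdNormalCDF
  rw [← integral_Iic_eq_integral_Iio, ← integral_comp_neg_Ioi]
  exact setIntegral_congr_fun measurableSet_Ioi fun t _ => pdf_neg t


lemma hasDerivAt_neg_pdf (t : ℝ) :
    HasDerivAt (fun x => -stdNormalPDF x) (t * stdNormalPDF t) t := by
  have h1 : HasDerivAt (fun x : ℝ => -x ^ 2 / 2) (-t) t := by
    have := ((hasDerivAt_pow 2 t).neg).div_const 2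
    simpa using this.congr_deriv (by ring)
  have h2 := ((h1.exp).const_mul (Real.sqrt (2 * Real.pi))⁻¹).neg
  refine h2.congr_deriv ?_
  unfold stdNormalPDF
  ring

lemma pdf_tendsto : Tendsto stdNormalPDF atTop (nhds 0) := by
  have h0 : Tendsto (fun x : ℝ => x ^ 2 / 2) atTop atTop :=
    (tendsto_pow_atTop (two_ne_zero)).atTop_div_const (by norm_num)
  have h1 : Tendsto (fun x : ℝ => -x ^ 2 / 2) atTop atBot := by
    have := tendsto_neg_atTop_atBot.comp h0
    exact this.congr fun x => by simp [Function.comp, neg_div]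
  have h2 := (Real.tendsto_exp_atBot.comp h1).const_mul (Real.sqrt (2 * Real.pi))⁻¹
  rw [mul_zero] at h2
  exact h2.congr fun x => rfl

lemma pdf_div_tendsto : Tendsto (fun x => stdNormalPDF x / x) atTop (nhds 0) := by
  have := pdf_tendsto.mul tendsto_inv_atTop_zero
  simpa [div_eq_mul_inv] using this

lemma integral_Ioi_id_mul_pdf {u : ℝ} (hu : 0 < u) :
    ∫ t in Set.Ioi u, t * stdNormalPDF t = stdNormalPDF u := by
  have h := integral_Ioi_of_hasDerivAt_of_nonneg' (g := fun x => -stdNormalPDF x)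
    (g' := fun t => t * stdNormalPDF t) (a := u) (l := 0)
    (fun x _ => hasDerivAt_neg_pdf x)
    (fun x hx => mul_nonneg (hu.trans hx).le (pdf_pos x).le)
    (by simpa using pdf_tendsto.neg)
  simpa using h

lemma integrableOn_id_mul_pdf {u : ℝ} (hu : 0 < u) :
    IntegrableOn (fun t => t * stdNormalPDF t) (Set.Ioi u) := by
  exact integrableOn_Ioi_deriv_of_nonneg' (g := fun x => -stdNormalPDF x)
    (fun x _ => hasDerivAt_neg_pdf x)
    (fun x hx => mul_nonneg (hu.trans hx).le (pdf_pos x).le)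
    (by simpa using pdf_tendsto.neg)

lemma hasDerivAt_neg_pdf_div {t : ℝ} (ht : t ≠ 0) :
    HasDerivAt (fun x => -stdNormalPDF x / x) ((1 + 1 / t ^ 2) * stdNormalPDF t) t := by
  have h := (hasDerivAt_neg_pdf t).div (hasDerivAt_id t) ht
  refine h.congr_deriv ?_
  simp only [id_eq]
  field_simp
  ring

lemma integral_Ioi_aux2 {u : ℝ} (hu : 0 < u) :
    ∫ t in Set.Ioi u, (1 + 1 / t ^ 2) * stdNormalPDF t = stdNormalPDF u / u := by
  have h := integral_Ioi_of_hasDerivAt_of_nonneg' (g := fun x => -stdNormalPDF x / x)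
    (g' := fun t => (1 + 1 / t ^ 2) * stdNormalPDF t) (a := u) (l := 0)
    (fun x hx => hasDerivAt_neg_pdf_div (hu.trans_le hx).ne')
    (fun x hx => mul_nonneg (by positivity) (pdf_pos x).le)
    (by simpa [neg_div] using pdf_div_tendsto.neg)
  rw [h]; ring

lemma mills_upper {u : ℝ} (hu : 0 < u) :
    ∫ t in Set.Ioi u, stdNormalPDF t ≤ stdNormalPDF u / u := by
  have h1 : ∫ t in Set.Ioi u, stdNormalPDF t ≤ ∫ t in Set.Ioi u, u⁻¹ * (t * stdNormalPDF t) := by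
    apply setIntegral_mono_on integrable_pdf.integrableOn
      ((integrableOn_id_mul_pdf hu).const_mul u⁻¹) measurableSet_Ioi
    intro x hx
    have hx' : u < x := hx
    have : stdNormalPDF x * 1 ≤ stdNormalPDF x * (u⁻¹ * x) := by
      apply mul_le_mul_of_nonneg_left _ (pdf_pos x).le
      rw [← div_eq_inv_mul]
      exact (one_le_div hu).2 hx'.le
    linarith [this]
  rw [integral_const_mul, integral_Ioi_id_mul_pdf hu] at h1
  rw [div_eq_inv_mul]
  exact h1

lemma mills_lower {u : ℝ} (hu : 0 < u) :
    stdNormalPDF u * u / (1 + u ^ 2) ≤ ∫ t in Set.Ioi u, stdNormalPDF t := by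
  have h1 : ∫ t in Set.Ioi u, (1 + 1 / t ^ 2) * stdNormalPDF t
      ≤ ∫ t in Set.Ioi u, (1 + 1 / u ^ 2) * stdNormalPDF t := by
    apply setIntegral_mono_on ?_ (integrable_pdf.integrableOn.const_mul _) measurableSet_Ioi
    · intro x hx
      have hx' : u < x := hx
      apply mul_le_mul_of_nonneg_right _ (pdf_pos x).le
      have : 1 / x ^ 2 ≤ 1 / u ^ 2 := by
        apply one_div_le_one_div_of_le (by positivity)
        exact pow_le_pow_left₀ hu.le hx'.le 2
      linarith
    · exact integrableOn_Ioi_deriv_of_nonneg' (g := fun x => -stdNormalPDF x / x)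
        (fun x hx => hasDerivAt_neg_pdf_div (hu.trans_le hx).ne')
        (fun x hx => mul_nonneg (by positivity) (pdf_pos x).le)
        (by simpa [neg_div] using pdf_div_tendsto.neg)
  rw [integral_Ioi_aux2 hu, integral_const_mul] at h1
  have hpos : (0:ℝ) < 1 + 1 / u ^ 2 := by positivity
  have h2 : stdNormalPDF u / u / (1 + 1 / u ^ 2) ≤ ∫ t in Set.Ioi u, stdNormalPDF t :=
    (div_le_iff₀ hpos).2 (by linarith [h1])
  have : stdNormalPDF u * u / (1 + u ^ 2) = stdNormalPDF u / u / (1 + 1 / u ^ 2) := by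
    field_simp
    ring
  rw [this]
  exact h2

lemma cdf_mono : Monotone stdNormalCDF := fun a b hab => by
  unfold stdNormalCDF
  exact setIntegral_mono_set integrable_pdf.integrableOn
    (Filter.Eventually.of_forall fun x => (pdf_pos x).le)
    (HasSubset.Subset.eventuallyLE (Set.Iio_subset_Iio hab))

lemma cdf_pos (x : ℝ) : 0 < stdNormalCDF x := by
  unfold stdNormalCDF
  rw [setIntegral_pos_iff_support_of_nonneg_ae
    (Filter.Eventually.of_forall fun t => (pdf_pos t).le) integrable_pdf.integrableOn]
  have hsupp : Function.support stdNormalPDF = Set.univ :=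
    Set.eq_univ_of_forall fun t => Function.mem_support.2 (pdf_pos t).ne'
  rw [hsupp, Set.univ_inter, Real.volume_Iio]
  exact ENNReal.zero_lt_top

lemma tendsto_sqrt_atTop : Tendsto Real.sqrt atTop atTop := by
  rw [tendsto_atTop]
  intro M
  filter_upwards [eventually_ge_atTop (M ^ 2)] with x hx
  calc M ≤ |M| := le_abs_self M
    _ = Real.sqrt (M ^ 2) := (Real.sqrt_sq_eq_abs M).symm
    _ ≤ Real.sqrt x := Real.sqrt_le_sqrt hx


end MvpAux

set_option maxHeartbeats 3200000

/-- Proposition 4: with `Φ(ε*) = ε ∈ (0,1)`, the expected number of common features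
`E(c^{(ε)}) = p(1 - Φ((ε* - μ_p)/τ_p))` converges to `α exp(-ε* - 1/2)` as `p → ∞`. -/
theorem mvpIBP_common_features (α : ℝ) (hα : 0 < α) (μ : ℕ → ℝ)
    (hμ : ∀ p : ℕ, 2 ≤ p →
      stdNormalCDF (μ p / Real.sqrt (1 + tauP p ^ 2)) = α / (α + p))
    (ε εstar : ℝ) (hε : ε ∈ Set.Ioo (0 : ℝ) 1) (hεstar : stdNormalCDF εstar = ε) :
    Filter.Tendsto
      (fun p : ℕ => (p : ℝ) * (1 - stdNormalCDF ((εstar - μ p) / tauP p)))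
      Filter.atTop (nhds (α * Real.exp (-εstar - 1 / 2))) := by
  have hπ := MvpAux.sqrt2pi_pos
  obtain ⟨S, hS⟩ : ∃ S : ℕ → ℝ, S = fun p => Real.sqrt (1 + tauP p ^ 2) := ⟨_, rfl⟩
  have hSpos : ∀ p, 0 < S p := fun p => by
    rw [hS]; exact Real.sqrt_pos.2 (by positivity)
  have hSsq : ∀ p, S p ^ 2 = 1 + tauP p ^ 2 := fun p => by
    rw [hS]; exact Real.sq_sqrt (by positivity)
  obtain ⟨u, hu⟩ : ∃ u : ℕ → ℝ, u = fun p => -(μ p / S p) := ⟨_, rfl⟩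
  have hμu : ∀ p, μ p = -(u p) * S p := fun p => by
    simp only [hu, neg_neg]
    exact (div_mul_cancel₀ _ (hSpos p).ne').symm
  have hlogN : Tendsto (fun p : ℕ => Real.log p) atTop atTop :=
    Real.tendsto_log_atTop.comp tendsto_natCast_atTop_atTop
  have hτtop : Tendsto tauP atTop atTop :=
    MvpAux.tendsto_sqrt_atTop.comp (hlogN.const_mul_atTop two_pos)
  have hτpos : ∀ᶠ p : ℕ in atTop, 0 < tauP p := hτtop.eventually_gt_atTop 0
  have hμ' : ∀ᶠ p : ℕ in atTop, stdNormalCDF (-(u p)) = α / (α + p) := by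
    filter_upwards [eventually_ge_atTop 2] with p hp
    have := hμ p hp
    simp only [hu, hS, neg_neg]
    exact this
  have hN0 : Tendsto (fun p : ℕ => (α + (p : ℝ))) atTop atTop :=
    tendsto_atTop_add_const_left _ α tendsto_natCast_atTop_atTop
  have h2 : Tendsto (fun p : ℕ => α / (α + p)) atTop (nhds 0) :=
    Tendsto.div_atTop tendsto_const_nhds hN0
  -- u → ∞
  have hutop : Tendsto u atTop atTop := by
    rw [tendsto_atTop]
    intro M
    have hpos := MvpAux.cdf_pos (-M)
    filter_upwards [hμ', h2.eventually (eventually_lt_nhds hpos)] with p h1 h2'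
    by_contra h
    push_neg at h
    have hmono : stdNormalCDF (-M) ≤ stdNormalCDF (-(u p)) := MvpAux.cdf_mono (by linarith)
    rw [h1] at hmono
    linarith
  have hupos : ∀ᶠ p : ℕ in atTop, 1 ≤ u p := hutop.eventually_ge_atTop 1
  have hΦc : ∀ᶠ p : ℕ in atTop, ∫ t in Set.Ioi (u p), stdNormalPDF t = α / (α + p) := by
    filter_upwards [hμ'] with p h1
    rw [← MvpAux.cdf_neg, h1]
  -- the sequence A p = p φ(u p)/u p → α
  obtain ⟨A, hA⟩ : ∃ A : ℕ → ℝ, A = fun p : ℕ => (p : ℝ) * stdNormalPDF (u p) / u p := ⟨_, rfl⟩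
  have hplim : Tendsto (fun p : ℕ => (p : ℝ) / (α + p)) atTop (nhds 1) := by
    have h := (tendsto_const_nhds (x := (1 : ℝ)) (f := atTop)).sub h2
    rw [sub_zero] at h
    apply h.congr'
    filter_upwards [hN0.eventually_gt_atTop 0] with p hp
    field_simp
    ring
  have hqlim : Tendsto (fun p : ℕ => (p : ℝ) * (α / (α + p))) atTop (nhds α) := by
    have h := hplim.const_mul α
    rw [mul_one] at h
    apply h.congr
    intro p; ring
  have husqtop : Tendsto (fun p => (u p) ^ 2) atTop atTop :=
    (tendsto_pow_atTop two_ne_zero).comp hutop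
  have h1u2 : Tendsto (fun p => 1 + 1 / (u p) ^ 2) atTop (nhds 1) := by
    have h := (tendsto_const_nhds (x := (1 : ℝ)) (f := atTop)).add
      (Tendsto.div_atTop tendsto_const_nhds husqtop (f := fun _ => (1:ℝ)))
    rw [add_zero] at h
    exact h
  have hAlim : Tendsto A atTop (nhds α) := by
    have hup : Tendsto (fun p : ℕ => (p : ℝ) * (α / (α + p)) * (1 + 1 / (u p) ^ 2))
        atTop (nhds α) := by
      have := hqlim.mul h1u2
      rw [mul_one] at this
      exact this
    apply tendsto_of_tendsto_of_tendsto_of_le_of_le' hqlim hup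
    · filter_upwards [hupos, hΦc, eventually_ge_atTop 1] with p h1 h3 hp1
      have hup : (0:ℝ) < u p := by linarith
      have hmu := MvpAux.mills_upper hup
      rw [h3] at hmu
      have hpn : (0:ℝ) ≤ (p:ℝ) := Nat.cast_nonneg p
      simp only [hA]
      calc (p:ℝ) * (α/(α+p)) ≤ (p:ℝ) * (stdNormalPDF (u p) / u p) :=
            mul_le_mul_of_nonneg_left hmu hpn
        _ = (p:ℝ) * stdNormalPDF (u p) / u p := by ring
    · filter_upwards [hupos, hΦc] with p h1 h3
      have hup : (0:ℝ) < u p := by linarith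
      have hml := MvpAux.mills_lower hup
      rw [h3] at hml
      have hpn : (0:ℝ) ≤ (p:ℝ) := Nat.cast_nonneg p
      have key : stdNormalPDF (u p) / u p ≤ (α/(α+p)) * (1 + 1/(u p)^2) := by
        rw [div_le_iff₀ hup, show α/(α+p) * (1 + 1/(u p)^2) * u p
            = (α/(α+p)) * (1 + (u p)^2) / u p by field_simp; ring, le_div_iff₀ hup]
        have := (div_le_iff₀ (show (0:ℝ) < 1 + (u p)^2 by positivity)).1 hml
        linarith
      simp only [hA]
      calc (p:ℝ) * stdNormalPDF (u p) / u p = (p:ℝ) * (stdNormalPDF (u p) / u p) := by ring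
        _ ≤ (p:ℝ) * ((α/(α+p)) * (1 + 1/(u p)^2)) := mul_le_mul_of_nonneg_left key hpn
        _ = (p:ℝ) * (α/(α+p)) * (1 + 1/(u p)^2) := by ring
  have hApos : ∀ᶠ p : ℕ in atTop, 0 < A p := hAlim.eventually (eventually_gt_nhds hα)
  have hlogA : Tendsto (fun p => Real.log (A p)) atTop (nhds (Real.log α)) :=
    ((Real.continuousAt_log hα.ne').tendsto).comp hAlim
  -- log identity
  have hlogid : ∀ᶠ p : ℕ in atTop, Real.log (A p)
      = Real.log p - (u p) ^ 2 / 2 - Real.log (u p) - Real.log (Real.sqrt (2 * Real.pi)) := by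
    filter_upwards [hupos, eventually_ge_atTop 1] with p h1 hp1
    have hup : (0:ℝ) < u p := by linarith
    have hppos : (0:ℝ) < (p:ℝ) := by exact_mod_cast Nat.lt_of_lt_of_le Nat.zero_lt_one hp1
    simp only [hA]
    rw [Real.log_div (mul_pos hppos (MvpAux.pdf_pos _)).ne' hup.ne', Real.log_mul hppos.ne' (MvpAux.pdf_pos _).ne']
    unfold stdNormalPDF
    rw [Real.log_mul (inv_ne_zero hπ.ne') (Real.exp_ne_zero _), Real.log_inv, Real.log_exp]
    ring
  -- upper bound on u p ^ 2
  obtain ⟨C, hC⟩ : ∃ C : ℝ, C = -2 * Real.log (Real.sqrt (2 * Real.pi)) - 2 * Real.log α + 2 :=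
    ⟨_, rfl⟩
  have hub : ∀ᶠ p : ℕ in atTop, (u p) ^ 2 ≤ 2 * Real.log p + C := by
    filter_upwards [hlogid, hlogA.eventually (eventually_gt_nhds
      (show Real.log α - 1 < Real.log α by linarith)), hupos] with p hid hlA h1
    have hlogu : 0 ≤ Real.log (u p) := Real.log_nonneg h1
    rw [hC]
    linarith
  have hloglog : Tendsto (fun p : ℕ => Real.log (Real.log p) / Real.log p) atTop (nhds 0) := by
    have h := Real.isLittleO_log_id_atTop.tendsto_div_nhds_zero
    exact (h.comp hlogN).congr fun p => rfl
  have hlogu_div : Tendsto (fun p : ℕ => Real.log (u p) / Real.log p) atTop (nhds 0) := by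
    have hupper : Tendsto (fun p : ℕ =>
        Real.log 3 / (2 * Real.log p) + Real.log (Real.log p) / Real.log p / 2)
        atTop (nhds 0) := by
      have t1 : Tendsto (fun p : ℕ => Real.log 3 / (2 * Real.log p)) atTop (nhds 0) :=
        Tendsto.div_atTop tendsto_const_nhds (hlogN.const_mul_atTop two_pos)
      have t2 := hloglog.div_const 2
      have := t1.add t2
      simpa using this
    apply tendsto_of_tendsto_of_tendsto_of_le_of_le'
      (tendsto_const_nhds (x := (0:ℝ)) (f := atTop)) hupper
    · filter_upwards [hupos, hlogN.eventually_gt_atTop 0] with p h1 hlp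
      exact div_nonneg (Real.log_nonneg h1) hlp.le
    · filter_upwards [hupos, hub, hlogN.eventually_gt_atTop (max 1 C),
        hlogN.eventually_gt_atTop 0] with p h1 hub' hlC hlp
      have hup : (0:ℝ) < u p := by linarith
      have h3lp : (u p) ^ 2 ≤ 3 * Real.log p := by
        have : C ≤ Real.log p := le_of_lt (lt_of_le_of_lt (le_max_right 1 C) hlC)
        linarith
      have hlogu2 : 2 * Real.log (u p) ≤ Real.log 3 + Real.log (Real.log p) := by
        have h4 : Real.log ((u p) ^ 2) ≤ Real.log (3 * Real.log p) :=
          Real.log_le_log (by positivity) h3lp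
        rw [Real.log_pow, Real.log_mul (by norm_num) hlp.ne'] at h4
        push_cast at h4
        linarith
      have hr : Real.log 3 / (2 * Real.log p) + Real.log (Real.log p) / Real.log p / 2
          = (Real.log 3 + Real.log (Real.log p)) / (2 * Real.log p) := by
        field_simp
      rw [hr, div_le_div_iff₀ hlp (by positivity)]
      have hmul := mul_le_mul_of_nonneg_right hlogu2 hlp.le
      linarith
  -- (u/τ)² → 1
  have husqt : Tendsto (fun p : ℕ => (u p / tauP p) ^ 2) atTop (nhds 1) := by
    have hconst : Tendsto (fun p : ℕ =>
        (Real.log (Real.sqrt (2 * Real.pi)) + Real.log (A p)) / Real.log p) atTop (nhds 0) :=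
      Tendsto.div_atTop (tendsto_const_nhds.add hlogA) hlogN
    have hmain : Tendsto (fun p : ℕ => 1 - Real.log (u p) / Real.log p
        - (Real.log (Real.sqrt (2 * Real.pi)) + Real.log (A p)) / Real.log p)
        atTop (nhds 1) := by
      have := ((tendsto_const_nhds (x := (1:ℝ)) (f := atTop)).sub hlogu_div).sub hconst
      simpa using this
    apply hmain.congr'
    filter_upwards [hlogid, hτpos, hupos, hlogN.eventually_gt_atTop 0] with p hid hτ h1 hlp
    have hτ2 : tauP p ^ 2 = 2 * Real.log p := Real.sq_sqrt (by positivity)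
    rw [div_pow, hτ2]
    have hu2 : (u p) ^ 2 = 2 * Real.log p - 2 * Real.log (u p)
        - 2 * Real.log (Real.sqrt (2 * Real.pi)) - 2 * Real.log (A p) := by linarith
    rw [hu2]
    field_simp
    ring
  have hudivτ : Tendsto (fun p : ℕ => u p / tauP p) atTop (nhds 1) := by
    have h := (Real.continuous_sqrt.tendsto 1).comp husqt
    rw [Real.sqrt_one] at h
    apply h.congr'
    filter_upwards [hτpos, hupos] with p hτ h1
    have : (0:ℝ) ≤ u p / tauP p := by positivity
    simp only [Function.comp_apply]
    exact Real.sqrt_sq this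
  have hSdivτ : Tendsto (fun p : ℕ => S p / tauP p) atTop (nhds 1) := by
    have hτ2top : Tendsto (fun p : ℕ => (tauP p) ^ 2) atTop atTop :=
      (tendsto_pow_atTop two_ne_zero).comp hτtop
    have h0 : Tendsto (fun p : ℕ => 1 / (tauP p) ^ 2 + 1) atTop (nhds 1) := by
      have := (Tendsto.div_atTop (tendsto_const_nhds (x := (1:ℝ))) hτ2top).add
        (tendsto_const_nhds (x := (1:ℝ)) (f := atTop))
      simpa using this
    have h := (Real.continuous_sqrt.tendsto 1).comp h0
    rw [Real.sqrt_one] at h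
    apply h.congr'
    filter_upwards [hτpos] with p hτ
    simp only [Function.comp_apply]
    rw [hS]
    simp only []
    rw [show 1 / (tauP p) ^ 2 + 1 = (1 + tauP p ^ 2) / tauP p ^ 2 by field_simp,
      Real.sqrt_div (by positivity), Real.sqrt_sq hτ.le]
  obtain ⟨v, hv⟩ : ∃ v : ℕ → ℝ, v = fun p => (εstar - μ p) / tauP p := ⟨_, rfl⟩
  have hveq : ∀ p, v p = (εstar + u p * S p) / tauP p := fun p => by
    simp only [hv]; rw [hμu p]; ring_nf
  have hvdivτ : Tendsto (fun p : ℕ => v p / tauP p) atTop (nhds 1) := by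
    have hτ2top : Tendsto (fun p : ℕ => (tauP p) ^ 2) atTop atTop :=
      (tendsto_pow_atTop two_ne_zero).comp hτtop
    have ht1 : Tendsto (fun p : ℕ => εstar / (tauP p) ^ 2) atTop (nhds 0) :=
      Tendsto.div_atTop tendsto_const_nhds hτ2top
    have ht2 := hudivτ.mul hSdivτ
    have hsum := ht1.add ht2
    rw [zero_add, mul_one] at hsum
    apply hsum.congr'
    filter_upwards [hτpos] with p hτ
    rw [hveq]
    field_simp
  have hvtop : Tendsto v atTop atTop := by
    have h := Tendsto.pos_mul_atTop one_pos hvdivτ hτtop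
    apply h.congr'
    filter_upwards [hτpos] with p hτ
    exact div_mul_cancel₀ _ hτ.ne'
  have hvpos : ∀ᶠ p : ℕ in atTop, 1 ≤ v p := hvtop.eventually_ge_atTop 1
  have hdiff : Tendsto (fun p : ℕ => (v p) ^ 2 - (u p) ^ 2) atTop (nhds (1 + 2 * εstar)) := by
    have hτ2top : Tendsto (fun p : ℕ => (tauP p) ^ 2) atTop atTop :=
      (tendsto_pow_atTop two_ne_zero).comp hτtop
    have t1 : Tendsto (fun p : ℕ => εstar ^ 2 / (tauP p) ^ 2) atTop (nhds 0) :=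
      Tendsto.div_atTop tendsto_const_nhds hτ2top
    have t2 : Tendsto (fun p : ℕ => 2 * εstar * (u p / tauP p * (S p / tauP p)))
        atTop (nhds (2 * εstar)) := by
      have := (hudivτ.mul hSdivτ).const_mul (2 * εstar)
      simpa using this
    have hcomb := (t1.add t2).add husqt
    rw [zero_add] at hcomb
    have hcomb' : Tendsto (fun p : ℕ => εstar ^ 2 / (tauP p) ^ 2
        + 2 * εstar * (u p / tauP p * (S p / tauP p)) + (u p / tauP p) ^ 2)
        atTop (nhds (1 + 2 * εstar)) := by
      rw [show (1 : ℝ) + 2 * εstar = 2 * εstar + 1 by ring]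
      exact hcomb
    apply hcomb'.congr'
    filter_upwards [hτpos] with p hτ
    have h2 : S p ^ 2 = 1 + tauP p ^ 2 := hSsq p
    have e1 : (v p) ^ 2 = (εstar ^ 2 + 2 * εstar * (u p * S p) + (u p) ^ 2 * (S p) ^ 2)
        / (tauP p) ^ 2 := by
      rw [hveq, div_pow]
      congr 1
      ring
    rw [e1, h2]
    field_simp
    ring
  -- P p = p φ(v p)/v p → α e^{-ε*-1/2}
  have hP : Tendsto (fun p : ℕ => (p : ℝ) * stdNormalPDF (v p) / v p) atTop
      (nhds (α * Real.exp (-εstar - 1 / 2))) := by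
    have hexp : Tendsto (fun p : ℕ => Real.exp (-((v p) ^ 2 - (u p) ^ 2) / 2)) atTop
        (nhds (Real.exp (-εstar - 1 / 2))) := by
      have h := (Real.continuous_exp.tendsto _).comp ((hdiff.neg).div_const 2)
      rw [show -εstar - 1 / 2 = -(1 + 2 * εstar) / 2 by ring]
      exact h.congr fun p => rfl
    have huv : Tendsto (fun p : ℕ => u p / v p) atTop (nhds 1) := by
      have h := hudivτ.div hvdivτ one_ne_zero
      rw [div_one] at h
      apply h.congr'
      filter_upwards [hτpos, hvpos] with p hτ hv1
      have hvp : (0:ℝ) < v p := by linarith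
      simp only [Pi.div_apply]
      field_simp
    have hmain := (hAlim.mul huv).mul hexp
    rw [mul_one] at hmain
    apply hmain.congr'
    filter_upwards [hupos, hvpos, hτpos] with p h1 hv1 hτ
    have hup : (0:ℝ) < u p := by linarith
    have hvp : (0:ℝ) < v p := by linarith
    have hφ : stdNormalPDF (v p) = stdNormalPDF (u p) * Real.exp (-((v p) ^ 2 - (u p) ^ 2) / 2) := by
      unfold stdNormalPDF
      rw [mul_assoc, ← Real.exp_add]
      ring_nf
    rw [hA, hφ]
    field_simp
  -- final squeeze
  have hfrac : Tendsto (fun p : ℕ => (v p) ^ 2 / (1 + (v p) ^ 2)) atTop (nhds 1) := by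
    have hv2 : Tendsto (fun p : ℕ => 1 + (v p) ^ 2) atTop atTop :=
      tendsto_atTop_add_const_left _ 1 ((tendsto_pow_atTop two_ne_zero).comp hvtop)
    have h0 : Tendsto (fun p : ℕ => 1 / (1 + (v p) ^ 2)) atTop (nhds 0) :=
      Tendsto.div_atTop tendsto_const_nhds hv2
    have h := (tendsto_const_nhds (x := (1:ℝ)) (f := atTop)).sub h0
    rw [sub_zero] at h
    apply h.congr'
    filter_upwards [hvpos] with p hv1
    have : (0:ℝ) < 1 + (v p) ^ 2 := by positivity
    field_simp
    ring
  have hlow : Tendsto (fun p : ℕ => ((p : ℝ) * stdNormalPDF (v p) / v p)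
      * ((v p) ^ 2 / (1 + (v p) ^ 2))) atTop (nhds (α * Real.exp (-εstar - 1 / 2))) := by
    have := hP.mul hfrac
    rw [mul_one] at this
    exact this
  have hgoal : (fun p : ℕ => (p : ℝ) * (1 - stdNormalCDF ((εstar - μ p) / tauP p)))
      = fun p : ℕ => (p : ℝ) * (1 - stdNormalCDF (v p)) := by
    funext p; rw [hv]
  rw [hgoal]
  apply tendsto_of_tendsto_of_tendsto_of_le_of_le' hlow hP
  · filter_upwards [hvpos] with p hv1
    have hvp : (0:ℝ) < v p := by linarith
    have hml := MvpAux.mills_lower hvp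
    have hpn : (0:ℝ) ≤ (p:ℝ) := Nat.cast_nonneg p
    rw [MvpAux.one_sub_cdf]
    calc (p:ℝ) * stdNormalPDF (v p) / v p * ((v p) ^ 2 / (1 + (v p) ^ 2))
        = (p:ℝ) * (stdNormalPDF (v p) * v p / (1 + (v p) ^ 2)) := by field_simp
      _ ≤ (p:ℝ) * ∫ t in Set.Ioi (v p), stdNormalPDF t := mul_le_mul_of_nonneg_left hml hpn
  · filter_upwards [hvpos] with p hv1
    have hvp : (0:ℝ) < v p := by linarith
    have hmu := MvpAux.mills_upper hvp
    have hpn : (0:ℝ) ≤ (p:ℝ) := Nat.cast_nonneg p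
    rw [MvpAux.one_sub_cdf]
    calc (p:ℝ) * ∫ t in Set.Ioi (v p), stdNormalPDF t
        ≤ (p:ℝ) * (stdNormalPDF (v p) / v p) := mul_le_mul_of_nonneg_left hmu hpn
      _ = (p:ℝ) * stdNormalPDF (v p) / v p := by ring
end

section
/- (Drezner decomposition of the bivariate normal CDF) For every ρ ∈ (−1,1) and all b₁, b₂ ∈ ℝ, Φ₂(b₁, b₂; ρ) = Φ(b₁)Φ(b₂) + (1/(2π)) ∫_0^ρ (1−z²)^{−1/2} exp(−(b₁² − 2 b₁ b₂ z + b₂²)/(2(1−z²))) dz. -/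
open MeasureTheory Real Filter

open Set Topology

/-- The bivariate standard normal CDF with correlation `ρ`:
`Φ₂(b₁,b₂;ρ) = ∫_{-∞}^{b₁} ∫_{-∞}^{b₂} (2π√(1-ρ²))⁻¹ exp(-(x²-2ρxy+y²)/(2(1-ρ²))) dy dx`. -/
noncomputable def biNormalCDF (ρ b₁ b₂ : ℝ) : ℝ :=
  ∫ x in Set.Iio b₁, ∫ y in Set.Iio b₂,
    (2 * Real.pi * Real.sqrt (1 - ρ ^ 2))⁻¹ *
      Real.exp (-(x ^ 2 - 2 * ρ * x * y + y ^ 2) / (2 * (1 - ρ ^ 2)))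

noncomputable def drF (z x y : ℝ) : ℝ :=
  (2 * Real.pi * Real.sqrt (1 - z ^ 2))⁻¹ *
    Real.exp (-(x ^ 2 - 2 * z * x * y + y ^ 2) / (2 * (1 - z ^ 2)))

noncomputable def drA (z x y : ℝ) : ℝ := (-(x - z * y) / (1 - z ^ 2)) * drF z x y

noncomputable def drD (z x y : ℝ) : ℝ :=
  ((z * (1 - z ^ 2) + (x - z * y) * (y - z * x)) / (1 - z ^ 2) ^ 2) * drF z x y

lemma drF_pos {z : ℝ} (hz : z ^ 2 < 1) (x y : ℝ) : 0 < drF z x y := by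
  have h : 0 < 1 - z ^ 2 := by linarith
  have : 0 < Real.sqrt (1 - z ^ 2) := Real.sqrt_pos.2 h
  exact mul_pos (inv_pos.2 (by positivity)) (Real.exp_pos _)

lemma hasDerivAt_drF_x {z : ℝ} (hz : z ^ 2 < 1) (x y : ℝ) :
    HasDerivAt (fun x => drF z x y) (drA z x y) x := by
  have hs : (0:ℝ) < 1 - z ^ 2 := by linarith
  have hx2 : HasDerivAt (fun x : ℝ => x ^ 2) (2 * x) x := by
    simpa using hasDerivAt_pow 2 x
  have hlin : HasDerivAt (fun x : ℝ => 2 * z * x * y) (2 * z * y) x := by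
    simpa using (((hasDerivAt_id x).const_mul (2 * z)).mul_const y)
  have hQ : HasDerivAt (fun x : ℝ => x ^ 2 - 2 * z * x * y + y ^ 2)
      (2 * x - 2 * z * y) x := (hx2.sub hlin).add_const _
  have hE := (hQ.fun_neg).div_const (2 * (1 - z ^ 2))
  have := (hE.exp).const_mul ((2 * Real.pi * Real.sqrt (1 - z ^ 2))⁻¹)
  simp only [drF, drA]
  refine this.congr_deriv ?_
  field_simp

lemma hasDerivAt_drF_y {z : ℝ} (hz : z ^ 2 < 1) (x y : ℝ) :
    HasDerivAt (fun y => drF z x y) ((-(y - z * x) / (1 - z ^ 2)) * drF z x y) y := by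
  have hs : (0:ℝ) < 1 - z ^ 2 := by linarith
  have hy2 : HasDerivAt (fun y : ℝ => y ^ 2) (2 * y) y := by
    simpa using hasDerivAt_pow 2 y
  have hlin : HasDerivAt (fun y : ℝ => 2 * z * x * y) (2 * z * x) y := by
    simpa using ((hasDerivAt_id y).const_mul (2 * z * x))
  have hQ : HasDerivAt (fun y : ℝ => x ^ 2 - 2 * z * x * y + y ^ 2)
      (-(2 * z * x) + 2 * y) y := (hlin.const_sub (x ^ 2)).add hy2
  have hE := (hQ.fun_neg).div_const (2 * (1 - z ^ 2))
  have := (hE.exp).const_mul ((2 * Real.pi * Real.sqrt (1 - z ^ 2))⁻¹)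
  simp only [drF]
  refine this.congr_deriv ?_
  field_simp
  ring

lemma hasDerivAt_drA_y {z : ℝ} (hz : z ^ 2 < 1) (x y : ℝ) :
    HasDerivAt (fun y => drA z x y) (drD z x y) y := by
  have hs : (0:ℝ) < 1 - z ^ 2 := by linarith
  have h1 : HasDerivAt (fun y : ℝ => -(x - z * y) / (1 - z ^ 2))
      (- -(z * 1) / (1 - z ^ 2)) y :=
    ((((hasDerivAt_id y).const_mul z).const_sub x).fun_neg).div_const _
  have h2 := hasDerivAt_drF_y hz x y
  have := h1.fun_mul h2
  simp only [drA, drD]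
  refine this.congr_deriv ?_
  simp only [drF]
  field_simp

lemma hasDerivAt_drF_z {z : ℝ} (hz : z ^ 2 < 1) (x y : ℝ) :
    HasDerivAt (fun z => drF z x y) (drD z x y) z := by
  have hs : (0:ℝ) < 1 - z ^ 2 := by linarith
  have hsq : Real.sqrt (1 - z ^ 2) ≠ 0 := ne_of_gt (Real.sqrt_pos.2 hs)
  have hs' : HasDerivAt (fun z : ℝ => 1 - z ^ 2) (-(2 * z)) z := by
    simpa using (hasDerivAt_pow 2 z).const_sub 1
  have hsqrt : HasDerivAt (fun z : ℝ => Real.sqrt (1 - z ^ 2))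
      (-(2 * z) / (2 * Real.sqrt (1 - z ^ 2))) z := hs'.sqrt (ne_of_gt hs)
  have hmul : HasDerivAt (fun z : ℝ => 2 * Real.pi * Real.sqrt (1 - z ^ 2))
      (2 * Real.pi * (-(2 * z) / (2 * Real.sqrt (1 - z ^ 2)))) z :=
    hsqrt.const_mul (2 * Real.pi)
  have hne : 2 * Real.pi * Real.sqrt (1 - z ^ 2) ≠ 0 := by positivity
  have hinv := hmul.fun_inv hne
  -- exponent
  have hlin : HasDerivAt (fun z : ℝ => 2 * z * x * y) (2 * x * y) z := by
    simpa using (((hasDerivAt_id z).const_mul 2).mul_const x).mul_const y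
  have hQ : HasDerivAt (fun z : ℝ => -(x ^ 2 - 2 * z * x * y + y ^ 2))
      (2 * x * y) z := by
    simpa using (((hlin.const_sub (x ^ 2)).add_const (y ^ 2)).fun_neg)
  have hden : HasDerivAt (fun z : ℝ => 2 * (1 - z ^ 2)) (2 * -(2 * z)) z :=
    hs'.const_mul 2
  have hdne : 2 * (1 - z ^ 2) ≠ 0 := by positivity
  have hE := hQ.fun_div hden hdne
  have hu2 : Real.sqrt (1 - z ^ 2) ^ 2 = 1 - z ^ 2 := Real.sq_sqrt hs.le
  set u := Real.sqrt (1 - z ^ 2) with hu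
  have hupos : 0 < u := Real.sqrt_pos.2 hs
  have hpi : Real.pi ≠ 0 := Real.pi_ne_zero
  have this2 := hinv.fun_mul hE.exp
  set E := Real.exp (-(x ^ 2 - 2 * z * x * y + y ^ 2) / (2 * (1 - z ^ 2))) with hE'
  have e1 : -(2 * Real.pi * (-(2 * z) / (2 * u))) / (2 * Real.pi * u) ^ 2
      = z / (1 - z ^ 2) * (2 * Real.pi * u)⁻¹ := by
    have h4 : (2 * Real.pi * u) ^ 2 = 4 * Real.pi ^ 2 * (1 - z ^ 2) := by
      rw [mul_pow, mul_pow, hu2]; ring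
    rw [h4]
    field_simp
    nlinarith [hu2, hupos]
  have e2 : (2 * x * y * (2 * (1 - z ^ 2)) - -(x ^ 2 - 2 * z * x * y + y ^ 2) * (2 * -(2 * z)))
        / (2 * (1 - z ^ 2)) ^ 2
      = (x * y * (1 - z ^ 2) - z * (x ^ 2 - 2 * z * x * y + y ^ 2)) / (1 - z ^ 2) ^ 2 := by
    field_simp
  have e3 : -(2 * Real.pi * (-(2 * z) / (2 * u))) / (2 * Real.pi * u) ^ 2 * E
        + (2 * Real.pi * u)⁻¹ * (E * ((2 * x * y * (2 * (1 - z ^ 2)) - -(x ^ 2 - 2 * z * x * y + y ^ 2) * (2 * -(2 * z))) / (2 * (1 - z ^ 2)) ^ 2))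
      = drD z x y := by
    rw [e1, e2]
    simp only [drD, drF, ← hu, ← hE']
    field_simp
    ring
  rw [e3] at this2
  exact this2

lemma key_quad {z r x y : ℝ} (hz : |z| ≤ r) :
    (1 - r) * (x ^ 2 + y ^ 2) ≤ x ^ 2 - 2 * z * x * y + y ^ 2 := by
  obtain ⟨h1, h2⟩ := abs_le.1 hz
  nlinarith [mul_nonneg (sub_nonneg.2 h2) (sq_nonneg (x + y)),
    mul_nonneg (by linarith : (0:ℝ) ≤ r + z) (sq_nonneg (x - y))]

lemma drF_le {z r : ℝ} (hr : r < 1) (hz : |z| ≤ r) (x y : ℝ) :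
    drF z x y ≤ (2 * Real.pi * Real.sqrt (1 - r ^ 2))⁻¹ *
      (Real.exp (-((1 - r) / 2) * x ^ 2) * Real.exp (-((1 - r) / 2) * y ^ 2)) := by
  have hr0 : 0 ≤ r := (abs_nonneg z).trans hz
  have hr2 : r ^ 2 < 1 := by nlinarith
  have hz2 : z ^ 2 ≤ r ^ 2 := by
    have := abs_le.1 hz; nlinarith [abs_nonneg z, sq_abs z]
  have hs : (0:ℝ) < 1 - z ^ 2 := by nlinarith
  have hsr : (0:ℝ) < 1 - r ^ 2 := by nlinarith
  have h1 : (2 * Real.pi * Real.sqrt (1 - z ^ 2))⁻¹ ≤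
      (2 * Real.pi * Real.sqrt (1 - r ^ 2))⁻¹ := by
    apply inv_anti₀ (by positivity)
    have := Real.sqrt_le_sqrt (by linarith : 1 - r ^ 2 ≤ 1 - z ^ 2)
    nlinarith [Real.pi_pos]
  have hkey := key_quad (x := x) (y := y) hz
  have hQ0 : (0:ℝ) ≤ x ^ 2 - 2 * z * x * y + y ^ 2 := by nlinarith [sq_nonneg (x + y), sq_nonneg (x - y)]
  have h2 : Real.exp (-(x ^ 2 - 2 * z * x * y + y ^ 2) / (2 * (1 - z ^ 2))) ≤
      Real.exp (-((1 - r) / 2) * x ^ 2) * Real.exp (-((1 - r) / 2) * y ^ 2) := by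
    rw [← Real.exp_add]
    apply Real.exp_le_exp.2
    rw [neg_div, neg_le]
    have hineq : ((1 - r) / 2 * x ^ 2 + (1 - r) / 2 * y ^ 2) * (2 * (1 - z ^ 2))
        ≤ x ^ 2 - 2 * z * x * y + y ^ 2 := by
      have h3 : (1 - r) * (x ^ 2 + y ^ 2) * (1 - z ^ 2) ≤ (1 - r) * (x ^ 2 + y ^ 2) := by
        have h4 : (0:ℝ) ≤ (1 - r) * (x ^ 2 + y ^ 2) := mul_nonneg (by linarith) (by positivity)
        nlinarith [sq_nonneg z]
      nlinarith
    rw [le_div_iff₀ (by linarith : (0:ℝ) < 2 * (1 - z ^ 2))] at *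
    linarith [hineq]
  simp only [drF]
  exact mul_le_mul h1 h2 (Real.exp_pos _).le (by positivity)

lemma abs_drD_le {z r : ℝ} (hr : r < 1) (hz : |z| ≤ r) (x y : ℝ) :
    |drD z x y| ≤ (2 * ((1 - r ^ 2) ^ 2)⁻¹ * (2 * Real.pi * Real.sqrt (1 - r ^ 2))⁻¹) *
      (((1 + x ^ 2) * Real.exp (-((1 - r) / 2) * x ^ 2)) *
        ((1 + y ^ 2) * Real.exp (-((1 - r) / 2) * y ^ 2))) := by
  have hr0 : 0 ≤ r := (abs_nonneg z).trans hz
  have hr2 : r ^ 2 < 1 := by nlinarith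
  have hz2 : z ^ 2 ≤ r ^ 2 := by
    have := abs_le.1 hz; nlinarith [abs_nonneg z, sq_abs z]
  have hs : (0:ℝ) < 1 - z ^ 2 := by nlinarith
  have hsr : (0:ℝ) < 1 - r ^ 2 := by nlinarith
  have hF := drF_pos (by nlinarith : z ^ 2 < 1) x y
  have habs : |drD z x y| =
      |z * (1 - z ^ 2) + (x - z * y) * (y - z * x)| / (1 - z ^ 2) ^ 2 * drF z x y := by
    rw [drD, abs_mul, abs_div, abs_of_pos (by positivity : (0:ℝ) < (1 - z ^ 2) ^ 2),
      abs_of_pos hF]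
  rw [habs]
  have hnum : |z * (1 - z ^ 2) + (x - z * y) * (y - z * x)| ≤ 2 * (1 + x ^ 2) * (1 + y ^ 2) := by
    have h1 : |z * (1 - z ^ 2) + (x - z * y) * (y - z * x)| ≤
        |z| * |1 - z ^ 2| + |x - z * y| * |y - z * x| := by
      calc _ ≤ |z * (1 - z ^ 2)| + |(x - z * y) * (y - z * x)| := abs_add_le _ _
        _ = _ := by rw [abs_mul, abs_mul]
    have hza : |z| ≤ 1 := hz.trans hr.le
    have h2 : |x - z * y| ≤ |x| + |y| := by
      calc |x - z * y| ≤ |x| + |z * y| := abs_sub _ _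
        _ ≤ |x| + |y| := by rw [abs_mul]; nlinarith [abs_nonneg y]
    have h3 : |y - z * x| ≤ |y| + |x| := by
      calc |y - z * x| ≤ |y| + |z * x| := abs_sub _ _
        _ ≤ |y| + |x| := by rw [abs_mul]; nlinarith [abs_nonneg x]
    have h4 : |1 - z ^ 2| ≤ 1 := by rw [abs_of_pos hs]; nlinarith [sq_nonneg z]
    nlinarith [sq_abs x, sq_abs y, abs_nonneg x, abs_nonneg y, sq_nonneg (|x| - |y|),
      sq_nonneg (|x| * |y|), mul_le_mul h2 h3 (by positivity) (by positivity),
      mul_le_mul hza h4 (by positivity) (by positivity), abs_nonneg (x - z * y),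
      abs_nonneg (z * (1 - z ^ 2))]
  have hdd : |z * (1 - z ^ 2) + (x - z * y) * (y - z * x)| / (1 - z ^ 2) ^ 2 ≤
      2 * (1 + x ^ 2) * (1 + y ^ 2) / (1 - r ^ 2) ^ 2 := by
    apply div_le_div₀ (by positivity) hnum (by positivity)
    have : 1 - r ^ 2 ≤ 1 - z ^ 2 := by nlinarith
    nlinarith
  calc _ ≤ (2 * (1 + x ^ 2) * (1 + y ^ 2) / (1 - r ^ 2) ^ 2) *
        ((2 * Real.pi * Real.sqrt (1 - r ^ 2))⁻¹ *
          (Real.exp (-((1 - r) / 2) * x ^ 2) * Real.exp (-((1 - r) / 2) * y ^ 2))) := by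
        apply mul_le_mul hdd (drF_le hr hz x y) hF.le (by positivity)
    _ = _ := by rw [div_eq_mul_inv]; ring

lemma abs_drA_le {z r : ℝ} (hr : r < 1) (hz : |z| ≤ r) (x y : ℝ) :
    |drA z x y| ≤ (2 * ((1 - r ^ 2) ^ 2)⁻¹ * (2 * Real.pi * Real.sqrt (1 - r ^ 2))⁻¹) *
      (((1 + x ^ 2) * Real.exp (-((1 - r) / 2) * x ^ 2)) *
        ((1 + y ^ 2) * Real.exp (-((1 - r) / 2) * y ^ 2))) := by
  have hr0 : 0 ≤ r := (abs_nonneg z).trans hz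
  have hr2 : r ^ 2 < 1 := by nlinarith
  have hz2 : z ^ 2 ≤ r ^ 2 := by
    have := abs_le.1 hz; nlinarith [abs_nonneg z, sq_abs z]
  have hs : (0:ℝ) < 1 - z ^ 2 := by nlinarith
  have hsr : (0:ℝ) < 1 - r ^ 2 := by nlinarith
  have hF := drF_pos (by nlinarith : z ^ 2 < 1) x y
  have habs : |drA z x y| = |x - z * y| / (1 - z ^ 2) * drF z x y := by
    rw [drA, abs_mul, abs_div, abs_neg, abs_of_pos hs, abs_of_pos hF]
  rw [habs]
  have hza : |z| ≤ 1 := hz.trans hr.le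
  have h2 : |x - z * y| ≤ |x| + |y| := by
    calc |x - z * y| ≤ |x| + |z * y| := abs_sub _ _
      _ ≤ |x| + |y| := by rw [abs_mul]; nlinarith [abs_nonneg y]
  have hnum : |x - z * y| ≤ 2 * (1 + x ^ 2) * (1 + y ^ 2) := by
    nlinarith [sq_abs x, sq_abs y, abs_nonneg x, abs_nonneg y,
      sq_nonneg (1 - |x|), sq_nonneg (1 - |y|), sq_nonneg (x * y)]
  have hdd : |x - z * y| / (1 - z ^ 2) ≤ 2 * (1 + x ^ 2) * (1 + y ^ 2) / (1 - r ^ 2) ^ 2 := by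
    apply div_le_div₀ (by positivity) hnum (by positivity)
    nlinarith [sq_nonneg r]
  calc _ ≤ (2 * (1 + x ^ 2) * (1 + y ^ 2) / (1 - r ^ 2) ^ 2) *
        ((2 * Real.pi * Real.sqrt (1 - r ^ 2))⁻¹ *
          (Real.exp (-((1 - r) / 2) * x ^ 2) * Real.exp (-((1 - r) / 2) * y ^ 2))) := by
        apply mul_le_mul hdd (drF_le hr hz x y) hF.le (by positivity)
    _ = _ := by rw [div_eq_mul_inv]; ring

lemma integrable_bnd {c : ℝ} (hc : 0 < c) :
    Integrable (fun x : ℝ => (1 + x ^ 2) * Real.exp (-c * x ^ 2)) := by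
  have h1 := integrable_exp_neg_mul_sq hc
  have h2 : Integrable (fun x : ℝ => x ^ 2 * Real.exp (-c * x ^ 2)) := by
    have h := integrable_rpow_mul_exp_neg_mul_sq hc (by norm_num : (-1:ℝ) < 2)
    have : ∀ x : ℝ, x ^ (2:ℝ) = x ^ 2 := fun x => by
      rw [show (2:ℝ) = ((2:ℕ):ℝ) by norm_num, Real.rpow_natCast]
    simpa [this] using h
  refine (h1.add h2).congr (ae_of_all _ fun x => ?_)
  simp only [Pi.add_apply]
  ring

lemma tendsto_bnd_atBot {c : ℝ} (hc : 0 < c) :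
    Tendsto (fun y : ℝ => (1 + y ^ 2) * Real.exp (-c * y ^ 2)) atBot (𝓝 0) := by
  have hsq : Tendsto (fun y : ℝ => y ^ 2) atBot atTop := by
    have h := (tendsto_pow_atTop (two_ne_zero)).comp tendsto_neg_atBot_atTop (α := ℝ)
    refine h.congr fun y => ?_
    simp [neg_pow]
  have h1 : Tendsto (fun t : ℝ => (1 + t) * Real.exp (-c * t)) atTop (𝓝 0) := by
    have ha : Tendsto (fun t : ℝ => Real.exp (-c * t)) atTop (𝓝 0) := by
      have := Real.tendsto_exp_atBot.comp (tendsto_id.const_mul_atTop_of_neg (by linarith : -c < 0))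
      exact this.congr fun t => rfl
    have hb : Tendsto (fun t : ℝ => t * Real.exp (-c * t)) atTop (𝓝 0) := by
      have h0 := tendsto_pow_mul_exp_neg_atTop_nhds_zero 1
      have hct : Tendsto (fun t : ℝ => c * t) atTop atTop :=
        Tendsto.const_mul_atTop hc tendsto_id
      have h2 := (h0.comp hct).const_mul (1 / c)
      rw [mul_zero] at h2
      refine h2.congr fun t => ?_
      simp only [Function.comp, pow_one, neg_mul]
      field_simp
    have := ha.add hb
    rw [add_zero] at this
    refine this.congr fun t => ?_
    ring
  have := h1.comp hsq
  exact this.congr fun y => rfl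

lemma continuous_drF_y (z x : ℝ) : Continuous fun y => drF z x y := by
  unfold drF; fun_prop

lemma continuous_drD_y (z x : ℝ) : Continuous fun y => drD z x y := by
  unfold drD drF; fun_prop

lemma continuous_drA_x (z y : ℝ) : Continuous fun x => drA z x y := by
  unfold drA drF; fun_prop

lemma continuous_drF_p (z : ℝ) : Continuous fun p : ℝ × ℝ => drF z p.1 p.2 := by
  unfold drF; fun_prop

lemma continuous_drD_p (z : ℝ) : Continuous fun p : ℝ × ℝ => drD z p.1 p.2 := by
  unfold drD drF; fun_prop

noncomputable def drK (r : ℝ) : ℝ :=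
  2 * ((1 - r ^ 2) ^ 2)⁻¹ * (2 * Real.pi * Real.sqrt (1 - r ^ 2))⁻¹

noncomputable def drB (r x : ℝ) : ℝ := (1 + x ^ 2) * Real.exp (-((1 - r) / 2) * x ^ 2)

lemma drK_nonneg (r : ℝ) : 0 ≤ drK r := by unfold drK; positivity

lemma drB_pos (r x : ℝ) : 0 < drB r x := by unfold drB; positivity

lemma integrable_drB {r : ℝ} (hr : r < 1) : Integrable (drB r) :=
  integrable_bnd (by linarith : (0:ℝ) < (1 - r) / 2)

lemma tendsto_drB {r : ℝ} (hr : r < 1) : Tendsto (drB r) atBot (𝓝 0) :=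
  tendsto_bnd_atBot (by linarith : (0:ℝ) < (1 - r) / 2)

lemma continuous_drB (r : ℝ) : Continuous (drB r) := by unfold drB; fun_prop

lemma abs_drD_le' {z r : ℝ} (hr : r < 1) (hz : |z| ≤ r) (x y : ℝ) :
    |drD z x y| ≤ drK r * (drB r x * drB r y) := by
  have := abs_drD_le hr hz x y
  unfold drK drB
  linarith [this]

lemma abs_drA_le' {z r : ℝ} (hr : r < 1) (hz : |z| ≤ r) (x y : ℝ) :
    |drA z x y| ≤ drK r * (drB r x * drB r y) := by
  have := abs_drA_le hr hz x y
  unfold drK drB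
  linarith [this]

lemma abs_drF_le' {z r : ℝ} (hr : r < 1) (hz : |z| ≤ r) (x y : ℝ) :
    |drF z x y| ≤ drK r * (drB r x * drB r y) := by
  have hr0 : 0 ≤ r := (abs_nonneg z).trans hz
  have hr2 : r ^ 2 < 1 := by nlinarith
  have hsr : (0:ℝ) < 1 - r ^ 2 := by nlinarith
  have hz1 : z ^ 2 < 1 := (sq_lt_one_iff_abs_lt_one z).2 (lt_of_le_of_lt hz hr)
  have h1 := drF_le hr hz x y
  rw [abs_of_pos (drF_pos hz1 x y)]
  have hC : (2 * Real.pi * Real.sqrt (1 - r ^ 2))⁻¹ ≤ drK r := by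
    unfold drK
    have h2 : (1:ℝ) ≤ 2 * ((1 - r ^ 2) ^ 2)⁻¹ := by
      rw [show (2 : ℝ) * ((1 - r ^ 2) ^ 2)⁻¹ = 2 / (1 - r ^ 2) ^ 2 by ring,
        le_div_iff₀ (by positivity)]
      nlinarith
    nlinarith [h2, inv_nonneg.2 (by positivity : (0:ℝ) ≤ 2 * Real.pi * Real.sqrt (1 - r ^ 2))]
  calc drF z x y ≤ (2 * Real.pi * Real.sqrt (1 - r ^ 2))⁻¹ *
        (Real.exp (-((1 - r) / 2) * x ^ 2) * Real.exp (-((1 - r) / 2) * y ^ 2)) := h1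
    _ ≤ drK r * (drB r x * drB r y) := by
        apply mul_le_mul hC ?_ (by positivity) (drK_nonneg r)
        unfold drB
        nlinarith [Real.exp_pos (-((1 - r) / 2) * x ^ 2), Real.exp_pos (-((1 - r) / 2) * y ^ 2),
          sq_nonneg x, sq_nonneg y, sq_nonneg (x * y),
          mul_pos (Real.exp_pos (-((1 - r) / 2) * x ^ 2)) (Real.exp_pos (-((1 - r) / 2) * y ^ 2))]

lemma integral_drD_y {z r : ℝ} (hr : r < 1) (hz : |z| ≤ r) (x b₂ : ℝ) :
    ∫ y in Iio b₂, drD z x y = drA z x b₂ := by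
  have hz1 : z ^ 2 < 1 := (sq_lt_one_iff_abs_lt_one z).2 (lt_of_le_of_lt hz hr)
  have hint : IntegrableOn (fun y => drD z x y) (Iic b₂) volume := by
    apply Integrable.integrableOn
    refine Integrable.mono' (((integrable_drB hr).const_mul (drK r * drB r x)))
      (continuous_drD_y z x).aestronglyMeasurable ?_
    filter_upwards with y
    calc ‖drD z x y‖ = |drD z x y| := rfl
      _ ≤ drK r * (drB r x * drB r y) := abs_drD_le' hr hz x y
      _ = drK r * drB r x * drB r y := by ring
  have htend : Tendsto (fun y => drA z x y) atBot (𝓝 0) := by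
    apply squeeze_zero_norm (f := fun y => drA z x y) (a := fun y => drK r * drB r x * drB r y)
    · intro y
      calc ‖drA z x y‖ = |drA z x y| := rfl
        _ ≤ drK r * (drB r x * drB r y) := abs_drA_le' hr hz x y
        _ = drK r * drB r x * drB r y := by ring
    · have := (tendsto_drB hr).const_mul (drK r * drB r x)
      rwa [mul_zero] at this
  have h := integral_Iic_of_hasDerivAt_of_tendsto'
    (f := fun y => drA z x y) (f' := fun y => drD z x y)
    (fun y _ => hasDerivAt_drA_y hz1 x y) hint htend
  rw [sub_zero] at h
  rw [← integral_Iic_eq_integral_Iio]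
  exact h

lemma integral_drA_x {z r : ℝ} (hr : r < 1) (hz : |z| ≤ r) (b₁ b₂ : ℝ) :
    ∫ x in Iio b₁, drA z x b₂ = drF z b₁ b₂ := by
  have hz1 : z ^ 2 < 1 := (sq_lt_one_iff_abs_lt_one z).2 (lt_of_le_of_lt hz hr)
  have hint : IntegrableOn (fun x => drA z x b₂) (Iic b₁) volume := by
    apply Integrable.integrableOn
    refine Integrable.mono' (((integrable_drB hr).const_mul (drK r * drB r b₂)))
      (continuous_drA_x z b₂).aestronglyMeasurable ?_
    filter_upwards with x
    calc ‖drA z x b₂‖ = |drA z x b₂| := rfl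
      _ ≤ drK r * (drB r x * drB r b₂) := abs_drA_le' hr hz x b₂
      _ = drK r * drB r b₂ * drB r x := by ring
  have htend : Tendsto (fun x => drF z x b₂) atBot (𝓝 0) := by
    apply squeeze_zero_norm (f := fun x => drF z x b₂) (a := fun x => drK r * drB r b₂ * drB r x)
    · intro x
      calc ‖drF z x b₂‖ = |drF z x b₂| := rfl
        _ ≤ drK r * (drB r x * drB r b₂) := abs_drF_le' hr hz x b₂
        _ = drK r * drB r b₂ * drB r x := by ring
    · have := (tendsto_drB hr).const_mul (drK r * drB r b₂)
      rwa [mul_zero] at this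
  have h := integral_Iic_of_hasDerivAt_of_tendsto'
    (f := fun x => drF z x b₂) (f' := fun x => drA z x b₂)
    (fun x _ => hasDerivAt_drF_x hz1 x b₂) hint htend
  rw [sub_zero] at h
  rw [← integral_Iic_eq_integral_Iio]
  exact h

lemma integrable_bnd_prod {r : ℝ} (hr : r < 1) :
    Integrable (fun p : ℝ × ℝ => drK r * (drB r p.1 * drB r p.2)) := by
  rw [MeasureTheory.Measure.volume_eq_prod]
  exact ((integrable_drB hr).mul_prod (integrable_drB hr)).const_mul (drK r)

lemma integrableOn_drF_prod {z r : ℝ} (hr : r < 1) (hz : |z| ≤ r) (b₁ b₂ : ℝ) :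
    IntegrableOn (fun p : ℝ × ℝ => drF z p.1 p.2) (Iio b₁ ×ˢ Iio b₂) := by
  apply Integrable.integrableOn
  refine Integrable.mono' (integrable_bnd_prod hr)
    (continuous_drF_p z).aestronglyMeasurable ?_
  filter_upwards with p
  exact abs_drF_le' hr hz p.1 p.2

lemma integrableOn_drD_prod {z r : ℝ} (hr : r < 1) (hz : |z| ≤ r) (b₁ b₂ : ℝ) :
    IntegrableOn (fun p : ℝ × ℝ => drD z p.1 p.2) (Iio b₁ ×ˢ Iio b₂) := by
  apply Integrable.integrableOn
  refine Integrable.mono' (integrable_bnd_prod hr)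
    (continuous_drD_p z).aestronglyMeasurable ?_
  filter_upwards with p
  exact abs_drD_le' hr hz p.1 p.2

lemma integral_drD_prod {z r : ℝ} (hr : r < 1) (hz : |z| ≤ r) (b₁ b₂ : ℝ) :
    ∫ p in Iio b₁ ×ˢ Iio b₂, drD z p.1 p.2 = drF z b₁ b₂ := by
  rw [show ((volume : Measure (ℝ × ℝ))) = (volume : Measure ℝ).prod volume from MeasureTheory.Measure.volume_eq_prod ℝ ℝ]
  rw [setIntegral_prod _ (by
    have := integrableOn_drD_prod hr hz b₁ b₂
    rwa [MeasureTheory.Measure.volume_eq_prod] at this)]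
  have h1 : ∀ x : ℝ, ∫ y in Iio b₂, drD z x y = drA z x b₂ := fun x => integral_drD_y hr hz x b₂
  simp_rw [h1]
  exact integral_drA_x hr hz b₁ b₂

lemma hasDerivAt_biInt {r : ℝ} (hr : r < 1) {z₀ : ℝ} (hz₀ : |z₀| < r) (b₁ b₂ : ℝ) :
    HasDerivAt (fun z => ∫ p in Iio b₁ ×ˢ Iio b₂, drF z p.1 p.2) (drF z₀ b₁ b₂) z₀ := by
  have hball : ∀ z ∈ Metric.ball z₀ (r - |z₀|), |z| ≤ r := by
    intro z hzb
    rw [Metric.mem_ball, Real.dist_eq] at hzb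
    calc |z| = |z - z₀ + z₀| := by ring_nf
      _ ≤ |z - z₀| + |z₀| := abs_add_le _ _
      _ ≤ r := by linarith
  have hbnd_int : Integrable (fun p : ℝ × ℝ => drK r * (drB r p.1 * drB r p.2))
      ((volume : Measure (ℝ × ℝ)).restrict (Iio b₁ ×ˢ Iio b₂)) :=
    (integrable_bnd_prod hr).restrict
  have h := hasDerivAt_integral_of_dominated_loc_of_deriv_le
    (μ := (volume : Measure (ℝ × ℝ)).restrict (Iio b₁ ×ˢ Iio b₂))
    (F := fun z p => drF z p.1 p.2) (F' := fun z p => drD z p.1 p.2)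
    (bound := fun p => drK r * (drB r p.1 * drB r p.2))
    (Metric.ball_mem_nhds z₀ (by linarith : 0 < r - |z₀|))
    (Eventually.of_forall fun z => (continuous_drF_p z).aestronglyMeasurable)
    (integrableOn_drF_prod hr hz₀.le b₁ b₂)
    (continuous_drD_p z₀).aestronglyMeasurable
    (ae_of_all _ fun p z hzb => abs_drD_le' hr (hball z hzb) p.1 p.2)
    hbnd_int
    (ae_of_all _ fun p z hzb => by
      have hz1 : z ^ 2 < 1 :=
        (sq_lt_one_iff_abs_lt_one z).2 (lt_of_le_of_lt (hball z hzb) hr)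
      exact hasDerivAt_drF_z hz1 p.1 p.2)
  have h2 := h.2
  rwa [integral_drD_prod hr hz₀.le b₁ b₂] at h2


lemma drF_zero (x y : ℝ) : drF 0 x y = stdNormalPDF x * stdNormalPDF y := by
  unfold drF stdNormalPDF
  have h1 : Real.sqrt (2 * Real.pi) * Real.sqrt (2 * Real.pi) = 2 * Real.pi :=
    Real.mul_self_sqrt (by positivity)
  have h2 : Real.sqrt (1 - (0:ℝ) ^ 2) = 1 := by norm_num
  rw [h2, mul_one, mul_mul_mul_comm, ← mul_inv, h1, ← Real.exp_add]
  congr 1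
  rw [Real.exp_eq_exp]
  ring

lemma integral_drF_zero (b₁ b₂ : ℝ) :
    ∫ p in Iio b₁ ×ˢ Iio b₂, drF 0 p.1 p.2 = stdNormalCDF b₁ * stdNormalCDF b₂ := by
  simp_rw [drF_zero]
  rw [MeasureTheory.Measure.volume_eq_prod, setIntegral_prod_mul]
  rfl

lemma biNormalCDF_eq {z r : ℝ} (hr : r < 1) (hz : |z| ≤ r) (b₁ b₂ : ℝ) :
    biNormalCDF z b₁ b₂ = ∫ p in Iio b₁ ×ˢ Iio b₂, drF z p.1 p.2 := by
  rw [show ((volume : Measure (ℝ × ℝ))) = (volume : Measure ℝ).prod volume from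
    MeasureTheory.Measure.volume_eq_prod ℝ ℝ]
  rw [setIntegral_prod _ (by
    have := integrableOn_drF_prod hr hz b₁ b₂
    rwa [MeasureTheory.Measure.volume_eq_prod] at this)]
  rfl

/-- Drezner decomposition: for `ρ ∈ (-1,1)` and all `b₁, b₂`,
`Φ₂(b₁,b₂;ρ) = Φ(b₁)Φ(b₂) + (2π)⁻¹ ∫_0^ρ (1-z²)^{-1/2} exp(-(b₁²-2b₁b₂z+b₂²)/(2(1-z²))) dz`. -/
theorem biNormalCDF_drezner (ρ : ℝ) (hρ : ρ ∈ Set.Ioo (-1 : ℝ) 1) (b₁ b₂ : ℝ) :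
    biNormalCDF ρ b₁ b₂ =
      stdNormalCDF b₁ * stdNormalCDF b₂ +
        (2 * Real.pi)⁻¹ *
          ∫ z in (0 : ℝ)..ρ,
            (Real.sqrt (1 - z ^ 2))⁻¹ *
              Real.exp (-(b₁ ^ 2 - 2 * b₁ * b₂ * z + b₂ ^ 2) / (2 * (1 - z ^ 2))) := by
  obtain ⟨hρ1, hρ2⟩ := hρ
  have hρa : |ρ| < 1 := abs_lt.2 ⟨hρ1, hρ2⟩
  set r : ℝ := (1 + |ρ|) / 2 with hrdef
  have hr : r < 1 := by rw [hrdef]; linarith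
  have hρr : |ρ| < r := by rw [hrdef]; linarith
  have habs : ∀ z ∈ Set.uIcc (0:ℝ) ρ, |z| ≤ |ρ| := by
    intro z hzm
    rcases le_total 0 ρ with h | h
    · rw [Set.uIcc_of_le h] at hzm
      obtain ⟨h1, h2⟩ := hzm
      rw [abs_le]
      constructor
      · linarith [abs_nonneg ρ]
      · exact h2.trans (le_abs_self ρ)
    · rw [Set.uIcc_of_ge h] at hzm
      obtain ⟨h1, h2⟩ := hzm
      rw [abs_le]
      constructor
      · calc -|ρ| = ρ := by rw [abs_of_nonpos h]; ring
          _ ≤ z := h1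
      · calc z ≤ 0 := h2
          _ ≤ |ρ| := abs_nonneg ρ
  have hderivAll : ∀ z ∈ Set.uIcc (0:ℝ) ρ,
      HasDerivAt (fun z => ∫ p in Iio b₁ ×ˢ Iio b₂, drF z p.1 p.2) (drF z b₁ b₂) z := by
    intro z hzm
    exact hasDerivAt_biInt hr (lt_of_le_of_lt (habs z hzm) hρr) b₁ b₂
  have hii : IntervalIntegrable (fun z => drF z b₁ b₂) volume 0 ρ := by
    apply ContinuousOn.intervalIntegrable
    intro z hzm
    have hz1 : z ^ 2 < 1 :=
      (sq_lt_one_iff_abs_lt_one z).2 (lt_of_le_of_lt (habs z hzm) hρa)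
    exact (hasDerivAt_drF_z hz1 b₁ b₂).continuousAt.continuousWithinAt
  have hftc := intervalIntegral.integral_eq_sub_of_hasDerivAt hderivAll hii
  have e1 : biNormalCDF ρ b₁ b₂ = ∫ p in Iio b₁ ×ˢ Iio b₂, drF ρ p.1 p.2 :=
    biNormalCDF_eq hr hρr.le b₁ b₂
  have e0 : (∫ p in Iio b₁ ×ˢ Iio b₂, drF 0 p.1 p.2) = stdNormalCDF b₁ * stdNormalCDF b₂ :=
    integral_drF_zero b₁ b₂
  have e2 : ∀ z : ℝ, drF z b₁ b₂ = (2 * Real.pi)⁻¹ *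
      ((Real.sqrt (1 - z ^ 2))⁻¹ *
        Real.exp (-(b₁ ^ 2 - 2 * b₁ * b₂ * z + b₂ ^ 2) / (2 * (1 - z ^ 2)))) := by
    intro z
    rw [drF, mul_inv]
    ring_nf
  have e3 : (∫ z in (0:ℝ)..ρ, drF z b₁ b₂) = (2 * Real.pi)⁻¹ *
      ∫ z in (0:ℝ)..ρ, (Real.sqrt (1 - z ^ 2))⁻¹ *
        Real.exp (-(b₁ ^ 2 - 2 * b₁ * b₂ * z + b₂ ^ 2) / (2 * (1 - z ^ 2))) := by
    simp_rw [e2]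
    exact intervalIntegral.integral_const_mul _ _
  rw [e1, ← e0]
  rw [← e3, hftc]
  ring
end
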